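/- For all α ∈ [0, π/2], sin α + π − α ≤ (π/3 + √3)(cos α + 1). -/

import Mathlib

open Real

theorem stmt_12 (α : ℝ) (hα : α ∈ Set.Icc 0 (π/2)) :
    Real.sin α + π - α ≤ (π/3 + Real.sqrt 3) * (Real.cos α + 1) := by
  obtain ⟨h0, h1⟩ := hα
  have hpi := Real.pi_pos
  -- Step 1: sin α + π - α ≤ (1 + π/2)(cos α + 1)
  set f : ℝ → ℝ := fun x => (1 + π/2) * (Real.cos x + 1) - Real.sin x - (π - x) with hf
  have hderiv : ∀ x : ℝ, HasDerivAt f (-(1 + π/2) * Real.sin x - Real.cos x + 1) x := by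
    intro x
    have h1 : HasDerivAt (fun x => (1 + π/2) * (Real.cos x + 1))
        ((1 + π/2) * (-Real.sin x)) x := by
      exact (((Real.hasDerivAt_cos x).add_const 1).const_mul _)
    have h2 := Real.hasDerivAt_sin x
    have h3 : HasDerivAt (fun x : ℝ => π - x) (-1) x := by
      simpa using (hasDerivAt_id x).const_sub π
    exact ((h1.sub h2).sub h3).congr_deriv (by ring)
  have hanti : AntitoneOn f (Set.Icc 0 (π/2)) := by
    apply antitoneOn_of_deriv_nonpos (convex_Icc _ _)
    · exact (Continuous.continuousOn (by continuity))
    · intro x hx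
      exact (hderiv x).differentiableAt.differentiableWithinAt
    · intro x hx
      rw [interior_Icc] at hx
      rw [(hderiv x).deriv]
      have hx0 : 0 < x := hx.1
      have hx1 : x < π/2 := hx.2
      have hs : 0 ≤ Real.sin x := Real.sin_nonneg_of_nonneg_of_le_pi hx0.le (by linarith)
      have hc : 0 ≤ Real.cos x := Real.cos_nonneg_of_mem_Icc ⟨by linarith, hx1.le⟩
      have hc1 : Real.cos x ≤ 1 := Real.cos_le_one x
      have hsc : Real.sin x ^ 2 + Real.cos x ^ 2 = 1 := Real.sin_sq_add_cos_sq x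
      -- 1 - cos x ≤ sin x
      have key : 1 - Real.cos x ≤ Real.sin x := by nlinarith
      nlinarith
  have hmem1 : α ∈ Set.Icc (0:ℝ) (π/2) := ⟨h0, h1⟩
  have hmem2 : (π/2) ∈ Set.Icc (0:ℝ) (π/2) := ⟨by linarith, le_refl _⟩
  have hstep := hanti hmem1 hmem2 h1
  have hend : f (π/2) = 0 := by
    simp [hf, Real.cos_pi_div_two, Real.sin_pi_div_two]
    ring
  have step1 : Real.sin α + π - α ≤ (1 + π/2) * (Real.cos α + 1) := by
    have : 0 ≤ f α := by rw [← hend]; exact hstep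
    simp only [hf] at this
    linarith
  -- Step 2: (1 + π/2) ≤ π/3 + √3
  have hsqrt : Real.sqrt 3 ^ 2 = 3 := Real.sq_sqrt (by norm_num)
  have hsn : 0 ≤ Real.sqrt 3 := Real.sqrt_nonneg 3
  have hpi315 : π ≤ 3.15 := by linarith [Real.pi_lt_d2]
  have hC : 1 + π/2 ≤ π/3 + Real.sqrt 3 := by nlinarith
  have hcos : 0 ≤ Real.cos α + 1 := by linarith [Real.neg_one_le_cos α]
  nlinarith [mul_le_mul_of_nonneg_right hC hcos]
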